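/- There exists a constant C > 0 with the following property. Let s and D be positive integers with s odd, s ≥ 3D, and s/(D·log D) ≥ C. Let x_0 be the unique positive real root of (X+3)^D (X+1)^{s+1} - X^D (X+2)^{s+1}. Then x_0 < 4·2^{-(s+1)/D}; in particular x_0 < 1/2. -/

import Mathlib

set_option maxHeartbeats 1000000 in
theorem stmt14 :
    ∃ C : ℝ, 0 < C ∧ ∀ s D : ℕ, 0 < s → 0 < D → Odd s → 3 * D ≤ s →
      C ≤ (s : ℝ) / (D * Real.log D) →
      ∀ x0 : ℝ, 0 < x0 →
        (x0 + 3) ^ D * (x0 + 1) ^ (s + 1) = x0 ^ D * (x0 + 2) ^ (s + 1) →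
        x0 < 4 * (2 : ℝ) ^ (-(((s : ℝ) + 1) / D)) ∧ x0 < 1 / 2 := by
  refine ⟨300, by norm_num, ?_⟩
  intro s D hs hD hodd hsD hC x0 hx0 heq
  have hD2 : 2 ≤ D := by
    by_contra h
    push_neg at h
    interval_cases D
    norm_num [Real.log_one] at hC
  have hD0 : (0:ℝ) < (D:ℝ) := by exact_mod_cast hD
  have hlog2l : (0.6931471803:ℝ) < Real.log 2 := Real.log_two_gt_d9
  have hlogD : Real.log 2 ≤ Real.log D := by
    apply Real.log_le_log (by norm_num)
    exact_mod_cast hD2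
  have hDlog : (0:ℝ) < (D:ℝ) * Real.log D := by
    apply mul_pos hD0; linarith
  have hsge : 300 * ((D:ℝ) * Real.log D) ≤ s := (le_div_iff₀ hDlog).mp hC
  set r : ℝ := ((s:ℝ) + 1) / (D:ℝ) with hr_def
  clear_value r
  have hr : (200:ℝ) ≤ r := by
    rw [hr_def, le_div_iff₀ hD0]
    nlinarith [mul_le_mul_of_nonneg_left hlogD (by positivity : (0:ℝ) ≤ 300*(D:ℝ)),
      mul_lt_mul_of_pos_left hlog2l hD0]
  have hrpos : (0:ℝ) < r := by linarith
  have h2r_pos : (0:ℝ) < (2:ℝ) ^ (-r) := Real.rpow_pos_of_pos (by norm_num) _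
  have h2rpos : (0:ℝ) < (2:ℝ) ^ r := Real.rpow_pos_of_pos (by norm_num) _
  set t : ℝ := 4 * (2:ℝ) ^ (-r) with ht_def
  clear_value t
  have htpos : 0 < t := by rw [ht_def]; positivity
  have ht4 : t ≤ 1/4 := by
    have h1 : (2:ℝ) ^ (-r) ≤ (2:ℝ) ^ (-(4:ℝ)) :=
      Real.rpow_le_rpow_of_exponent_le (by norm_num) (by linarith)
    have h4 : (2:ℝ) ^ (-(4:ℝ)) = 1/16 := by
      rw [Real.rpow_neg (by norm_num), show ((4:ℝ)) = ((4:ℕ):ℝ) by norm_num,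
        Real.rpow_natCast]
      norm_num
    rw [h4] at h1
    rw [ht_def]; linarith
  have hmain : x0 < t := by
    by_contra hcon
    push_neg at hcon
    have hx3 : (0:ℝ) < x0 + 3 := by linarith
    have hx2 : (0:ℝ) < x0 + 2 := by linarith
    have hx1 : (0:ℝ) < x0 + 1 := by linarith
    have key : (D:ℝ) * (Real.log (x0+3) - Real.log x0)
        = ((s:ℝ) + 1) * (Real.log (x0+2) - Real.log (x0+1)) := by
      have h := congrArg Real.log heq
      rw [Real.log_mul (by positivity) (by positivity),
          Real.log_mul (by positivity) (by positivity),
          Real.log_pow, Real.log_pow, Real.log_pow, Real.log_pow] at h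
      push_cast at h
      linarith
    set L := Real.log (x0+2) - Real.log (x0+1) with hL
    clear_value L
    set M := Real.log (x0+3) - Real.log x0 with hM
    clear_value M
    have hDrs : ((s:ℝ) + 1) = (D:ℝ) * r := by
      rw [hr_def]; field_simp
    have h200D : 200 * (D:ℝ) ≤ (s:ℝ) + 1 := by
      rw [hDrs]; nlinarith [mul_le_mul_of_nonneg_left hr hD0.le]
    have hcontr : (D:ℝ) * M < ((s:ℝ) + 1) * L := by
      rcases le_or_gt 1 x0 with hy1 | hy1
      · -- case x0 ≥ 1
        have hLlb : 1/(x0+2) ≤ L := by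
          have h := Real.log_le_sub_one_of_pos (show (0:ℝ) < (x0+1)/(x0+2) by positivity)
          rw [Real.log_div (by linarith) (by linarith)] at h
          have h2 : (x0+1)/(x0+2) - 1 = -(1/(x0+2)) := by field_simp; ring
          rw [h2] at h
          rw [hL]; linarith
        have hMub : M ≤ 3/x0 := by
          have h := Real.log_le_sub_one_of_pos (show (0:ℝ) < (x0+3)/x0 by positivity)
          rw [Real.log_div (by linarith) (by linarith)] at h
          have h2 : (x0+3)/x0 - 1 = 3/x0 := by field_simp; ring
          rw [h2] at h
          rw [hM]; linarith
        have hmid : (3*(D:ℝ))/x0 < ((s:ℝ)+1)/(x0+2) := by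
          rw [div_lt_div_iff₀ hx0 hx2]
          nlinarith [mul_le_mul_of_nonneg_right h200D hx0.le, mul_pos hD0 hx0,
            mul_le_mul_of_nonneg_left hy1 hD0.le]
        calc (D:ℝ) * M ≤ (D:ℝ) * (3/x0) := mul_le_mul_of_nonneg_left hMub hD0.le
          _ = (3*(D:ℝ))/x0 := by ring
          _ < ((s:ℝ)+1)/(x0+2) := hmid
          _ = ((s:ℝ)+1) * (1/(x0+2)) := by ring
          _ ≤ ((s:ℝ)+1) * L := mul_le_mul_of_nonneg_left hLlb (by positivity)
      · -- case x0 < 1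
        have hLlb : Real.log 2 - x0/2 ≤ L := by
          have h := Real.log_le_sub_one_of_pos (show (0:ℝ) < (2*x0+2)/(x0+2) by positivity)
          rw [Real.log_div (by linarith) (by linarith)] at h
          have h2 : Real.log (2*x0+2) = Real.log 2 + Real.log (x0+1) := by
            rw [show (2*x0+2 : ℝ) = 2*(x0+1) by ring, Real.log_mul (by norm_num) (by linarith)]
          rw [h2] at h
          have h3 : (2*x0+2)/(x0+2) - 1 = x0/(x0+2) := by field_simp; ring
          rw [h3] at h
          have h4 : x0/(x0+2) ≤ x0/2 :=
            div_le_div_of_nonneg_left hx0.le (by norm_num) (by linarith)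
          rw [hL]; linarith
        have hMub : M ≤ Real.log 3 + x0/3 - Real.log x0 := by
          have h := Real.log_le_sub_one_of_pos (show (0:ℝ) < (x0+3)/3 by positivity)
          rw [Real.log_div (by linarith) (by norm_num)] at h
          have h2 : (x0+3)/3 - 1 = x0/3 := by ring
          rw [h2] at h
          rw [hM]; linarith
        -- endpoint values of G(y) = r log 2 - log 3 + log y - y (r/2 + 1/3)
        have hlogt : Real.log t = 2*Real.log 2 - r * Real.log 2 := by
          rw [ht_def, Real.log_mul (by norm_num) (ne_of_gt h2r_pos),
            Real.log_rpow (by norm_num), show (4:ℝ) = 2^(2:ℕ) by norm_num, Real.log_pow]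
          push_cast; ring
        have hlog43 : (1/4:ℝ) ≤ 2*Real.log 2 - Real.log 3 := by
          have h := Real.log_le_sub_one_of_pos (show (0:ℝ) < 3/4 by norm_num)
          rw [Real.log_div (by norm_num) (by norm_num),
            show (4:ℝ) = 2^(2:ℕ) by norm_num, Real.log_pow] at h
          push_cast at h; linarith
        have hlog3 : Real.log 3 ≤ 2 * Real.log 2 := by
          have h := Real.log_le_log (by norm_num : (0:ℝ) < 3) (by norm_num : (3:ℝ) ≤ 4)
          rw [show (4:ℝ) = 2^(2:ℕ) by norm_num, Real.log_pow] at h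
          push_cast at h; linarith
        have hexp : 16 * r < (2:ℝ) ^ r := by
          have ha : r * Real.log 2 / 2 + 1 ≤ Real.exp (r * Real.log 2 / 2) :=
            Real.add_one_le_exp _
          have hE0 : (0:ℝ) ≤ r * Real.log 2 / 2 + 1 := by nlinarith
          have h1 : (2:ℝ) ^ r
              = Real.exp (r * Real.log 2 / 2) * Real.exp (r * Real.log 2 / 2) := by
            rw [Real.rpow_def_of_pos (by norm_num : (0:ℝ) < 2),
              show Real.log 2 * r = r * Real.log 2 / 2 + r * Real.log 2 / 2 by ring,
              Real.exp_add]
          have h6 : (r * Real.log 2 / 2 + 1) * (r * Real.log 2 / 2 + 1)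
              ≤ Real.exp (r * Real.log 2 / 2) * Real.exp (r * Real.log 2 / 2) :=
            mul_le_mul ha ha hE0 (Real.exp_pos _).le
          have h7 : (0.34657:ℝ)*r ≤ r * Real.log 2 / 2 := by
            nlinarith [mul_le_mul_of_nonneg_left hlog2l.le hrpos.le]
          have h8 : ((0.34657:ℝ)*r+1) * ((0.34657:ℝ)*r+1)
              ≤ (r * Real.log 2 / 2 + 1) * (r * Real.log 2 / 2 + 1) :=
            mul_le_mul (by linarith) (by linarith) (by positivity) (by nlinarith)
          have h9 : 200*r ≤ r*r := by nlinarith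
          rw [h1]
          nlinarith [h6, h8, h9]
        have htr : t * r < 1/4 := by
          have h2 : (2:ℝ) ^ (-r) = ((2:ℝ) ^ r)⁻¹ := Real.rpow_neg (by norm_num) r
          rw [ht_def, h2, show (4:ℝ) * ((2:ℝ)^r)⁻¹ * r = (4*r)/((2:ℝ)^r) by field_simp,
            div_lt_div_iff₀ h2rpos (by norm_num : (0:ℝ) < 4)]
          linarith
        have hGt : 0 < r*Real.log 2 - Real.log 3 + Real.log t - t*(r/2 + 1/3) := by
          have h1 : t*(r/2 + 1/3) ≤ t*r := mul_le_mul_of_nonneg_left (by linarith) htpos.le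
          rw [hlogt]
          linarith
        have hG1 : 0 < r*Real.log 2 - Real.log 3 - (r/2 + 1/3) := by
          have h1 : (r-2)*0.6931471803 ≤ (r-2)*Real.log 2 :=
            mul_le_mul_of_nonneg_left hlog2l.le (by linarith)
          linarith
        -- concavity of log on [t, 1]
        have ht1 : t < 1 := by linarith
        have hdne : (1:ℝ) - t ≠ 0 := by linarith
        set lam : ℝ := (1 - x0)/(1 - t) with hlam_def
        clear_value lam
        set mu : ℝ := (x0 - t)/(1 - t) with hmu_def
        clear_value mu
        have hlam0 : 0 < lam := by
          rw [hlam_def]; apply div_pos <;> linarith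
        have hmu0 : 0 ≤ mu := by
          rw [hmu_def]; apply div_nonneg <;> linarith
        have hsum : lam + mu = 1 := by
          rw [hlam_def, hmu_def]
          field_simp
          ring
        have hcomb : lam * t + mu * 1 = x0 := by
          rw [hlam_def, hmu_def]
          field_simp
          ring
        have hconc := (strictConcaveOn_log_Ioi.concaveOn).2
          (Set.mem_Ioi.mpr htpos) (Set.mem_Ioi.mpr one_pos) hlam0.le hmu0 hsum
        rw [smul_eq_mul, smul_eq_mul, smul_eq_mul, smul_eq_mul, hcomb, Real.log_one] at hconc
        have e0 : lam * Real.log t ≤ Real.log x0 := by linarith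
        have e2 : lam*(r*Real.log 2 - Real.log 3 + Real.log t - t*(r/2 + 1/3))
            + mu*(r*Real.log 2 - Real.log 3 - (r/2 + 1/3))
            = (r*Real.log 2 - Real.log 3) + lam*Real.log t - x0*(r/2 + 1/3) := by
          linear_combination (r*Real.log 2 - Real.log 3) * hsum - (r/2 + 1/3) * hcomb
        have hGx : 0 < r*Real.log 2 - Real.log 3 + Real.log x0 - x0*(r/2 + 1/3) := by
          linarith [mul_pos hlam0 hGt, mul_nonneg hmu0 hG1.le, e0, e2]
        have hL2 : (0:ℝ) < Real.log 2 - x0/2 := by linarith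
        calc (D:ℝ) * M ≤ (D:ℝ) * (Real.log 3 + x0/3 - Real.log x0) :=
              mul_le_mul_of_nonneg_left hMub hD0.le
          _ < (D:ℝ) * (r*(Real.log 2 - x0/2)) := by
              apply mul_lt_mul_of_pos_left _ hD0
              linarith
          _ = ((s:ℝ)+1) * (Real.log 2 - x0/2) := by rw [hDrs]; ring
          _ ≤ ((s:ℝ)+1) * L := mul_le_mul_of_nonneg_left hLlb (by positivity)
    linarith
  refine ⟨hmain, ?_⟩
  linarith
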